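/- For α < 1 there exist atomic probability measures a, b, c in the plane ℝ² for which J_α(a,c) + J_α(c,b) < J_α(a,b); specifically, with a = ½δ_{(−1,y+1)} + ½δ_{(1,y+1)}, b = δ_{(0,0)}, c = δ_{(0,y)}, the inequality 2·(1/2)^α·√2 + y < 2·(1/2)^α·√(1+(y+1)²) holds for y sufficiently large. Hence J_α fails the triangle inequality. -/

import Mathlib

open Filter Topology
open scoped Classical

/-- An atomic probability measure supported on at most `N` points, encoded as a
finitely supported weight function: nonnegative weights summing to `1`, with at
most `N` atoms. -/
def AtomicProb {Y : Type*} (N : ℕ) (a : Y →₀ ℝ) : Prop :=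
  (∀ y, 0 ≤ a y) ∧ (∑ y ∈ a.support, a y = 1) ∧ a.support.card ≤ N

/-- A transport plan from `a` to `b`: a finitely supported nonnegative weight
function on `Y × Y` whose marginals are `a` and `b`. -/
def IsPlan {Y : Type*} (a b : Y →₀ ℝ) (γ : (Y × Y) →₀ ℝ) : Prop :=
  (∀ p, 0 ≤ γ p) ∧
  (∀ x : Y, ∑ p ∈ γ.support.filter (fun p => p.1 = x), γ p = a x) ∧
  (∀ y : Y, ∑ p ∈ γ.support.filter (fun p => p.2 = y), γ p = b y)

/-- The cost `H_α(γ) = ∑ γ_{ij}^α d(x_i, y_j)` of a transport plan. -/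
noncomputable def Hcost {Y : Type*} [MetricSpace Y] (α : ℝ) (γ : (Y × Y) →₀ ℝ) : ℝ :=
  ∑ p ∈ γ.support, γ p ^ α * dist p.1 p.2

/-- `J_α(a,b)`: the minimal cost `H_α(γ)` over transport plans `γ` from `a`
to `b`. -/
noncomputable def Jalpha {Y : Type*} [MetricSpace Y] (α : ℝ) (a b : Y →₀ ℝ) : ℝ :=
  sInf {c : ℝ | ∃ γ : (Y × Y) →₀ ℝ, IsPlan a b γ ∧ c = Hcost α γ}

/-- `J_α` fails the triangle inequality: in the Euclidean plane, with
`a = ½δ_{(−1,y+1)} + ½δ_{(1,y+1)}`, `b = δ_{(0,0)}`, `c = δ_{(0,y)}`, for all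
sufficiently large `y` one has
`2(1/2)^α √2 + y < 2(1/2)^α √(1+(y+1)²)` and `J_α(a,c) + J_α(c,b) < J_α(a,b)`. -/
def pairEmb {Y : Type*} (z : Y) : Y ↪ Y × Y :=
  ⟨fun x => (x, z), fun _ _ h => (Prod.mk.injEq .. ▸ h).1⟩

noncomputable def planTo {Y : Type*} (a : Y →₀ ℝ) (z : Y) : (Y × Y) →₀ ℝ :=
  a.embDomain (pairEmb z)

lemma planTo_apply {Y : Type*} (a : Y →₀ ℝ) (z : Y) (x : Y) :
    planTo a z (x, z) = a x := Finsupp.embDomain_apply_self _ _ _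

lemma planTo_apply_ne {Y : Type*} (a : Y →₀ ℝ) (z : Y) (p : Y × Y) (h : p.2 ≠ z) :
    planTo a z p = 0 := by
  apply Finsupp.embDomain_notin_range
  rintro ⟨x, rfl⟩
  exact h rfl

lemma planTo_isPlan {Y : Type*} (a : Y →₀ ℝ) (ha : ∀ y, 0 ≤ a y) (z : Y) (w : ℝ)
    (hw : ∑ y ∈ a.support, a y = w) :
    IsPlan a (Finsupp.single z w) (planTo a z) := by
  have hsupp : (planTo a z).support = a.support.map (pairEmb z) :=
    Finsupp.support_embDomain _ _
  refine ⟨?_, ?_, ?_⟩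
  · intro p
    by_cases h : p.2 = z
    · obtain ⟨x, y⟩ := p
      simp only at h; subst h
      rw [planTo_apply]; exact ha x
    · rw [planTo_apply_ne _ _ _ h]
  · intro x
    rw [hsupp, Finset.filter_map, Finset.sum_map]
    have : Finset.filter ((fun p : Y × Y => p.1 = x) ∘ (pairEmb z))  a.support
        = Finset.filter (fun x' => x' = x) a.support := by
      apply Finset.filter_congr; intro x' _; simp [pairEmb]; exact Iff.rfl
    rw [this]
    simp only [planTo, Finsupp.embDomain_apply_self]
    rw [Finset.sum_filter]
    rw [Finset.sum_ite_eq' a.support x (fun x' => a x')]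
    by_cases hx : x ∈ a.support
    · simp [hx]
    · simp [hx, Finsupp.notMem_support_iff.mp hx]
  · intro y
    by_cases hy : y = z
    · subst hy
      have : Finset.filter (fun p : Y × Y => p.2 = y) (planTo a y).support = (planTo a y).support := by
        apply Finset.filter_true_of_mem
        intro p hp
        by_contra h
        exact Finsupp.mem_support_iff.mp hp (planTo_apply_ne _ _ _ h)
      rw [this, hsupp, Finset.sum_map]
      simp only [planTo, Finsupp.embDomain_apply_self, hw, Finsupp.single_eq_same]
    · have : Finset.filter (fun p : Y × Y => p.2 = y) (planTo a z).support = ∅ := by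
        apply Finset.filter_false_of_mem
        intro p hp h
        exact Finsupp.mem_support_iff.mp hp (planTo_apply_ne _ _ _ (h ▸ hy))
      rw [this]
      simp [Finsupp.single_eq_of_ne' (Ne.symm hy)]

lemma plan_unique {Y : Type*} (a : Y →₀ ℝ) (z : Y) (w : ℝ)
    (γ : (Y × Y) →₀ ℝ) (hγ : IsPlan a (Finsupp.single z w) γ) (hwz : w ≠ 0 → True) :
    γ = planTo a z := by
  obtain ⟨hpos, hm1, hm2⟩ := hγ
  have hz : ∀ p ∈ γ.support, p.2 = z := by
    intro p hp
    by_contra h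
    have h2 := hm2 p.2
    rw [Finsupp.single_eq_of_ne' (Ne.symm h)] at h2
    have := (Finset.sum_eq_zero_iff_of_nonneg (fun q _ => hpos q)).mp h2 p
      (Finset.mem_filter.mpr ⟨hp, rfl⟩)
    exact Finsupp.mem_support_iff.mp hp this
  ext p
  obtain ⟨x, y⟩ := p
  by_cases hy : y = z
  · rw [hy, planTo_apply]
    have h1 := hm1 x
    have hsub : Finset.filter (fun p : Y × Y => p.1 = x) γ.support ⊆ {(x, z)} := by
      intro p hp
      obtain ⟨hps, hp1⟩ := Finset.mem_filter.mp hp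
      have := hz p hps
      simp only [Finset.mem_singleton]
      exact Prod.ext hp1 this
    rw [← h1]
    rcases Finset.subset_singleton_iff.mp hsub with h | h
    · rw [h, Finset.sum_empty]
      by_contra hne
      have : (x, z) ∈ Finset.filter (fun p : Y × Y => p.1 = x) γ.support :=
        Finset.mem_filter.mpr ⟨Finsupp.mem_support_iff.mpr (fun h0 => hne (h0 ▸ rfl)), rfl⟩
      rw [h] at this; exact absurd this (Finset.notMem_empty _)
    · rw [h, Finset.sum_singleton]
  · rw [planTo_apply_ne _ _ _ hy]
    by_contra h
    exact hy (hz (x, y) (Finsupp.mem_support_iff.mpr h) )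

lemma Jalpha_single {Y : Type*} [MetricSpace Y] (α : ℝ) (a : Y →₀ ℝ) (ha : ∀ y, 0 ≤ a y)
    (z : Y) (w : ℝ) (hw : ∑ y ∈ a.support, a y = w) :
    Jalpha α a (Finsupp.single z w) = ∑ x ∈ a.support, a x ^ α * dist x z := by
  have hset : {c : ℝ | ∃ γ : (Y × Y) →₀ ℝ, IsPlan a (Finsupp.single z w) γ ∧ c = Hcost α γ}
      = {Hcost α (planTo a z)} := by
    ext c
    simp only [Set.mem_setOf_eq, Set.mem_singleton_iff]
    constructor
    · rintro ⟨γ, hγ, rfl⟩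
      rw [plan_unique a z w γ hγ (fun _ => trivial)]
    · rintro rfl
      exact ⟨planTo a z, planTo_isPlan a ha z w hw, rfl⟩
  rw [Jalpha, hset, csInf_singleton]
  have hsupp : (planTo a z).support = a.support.map (pairEmb z) :=
    Finsupp.support_embDomain _ _
  rw [Hcost, hsupp, Finset.sum_map]
  exact Finset.sum_congr rfl fun x _ => by
    rw [show planTo a z (pairEmb z x) = a x from planTo_apply a z x]; rfl

lemma Jalpha_two_single {Y : Type*} [MetricSpace Y] (α : ℝ) (p₁ p₂ q : Y) (hpq : p₁ ≠ p₂) :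
    Jalpha α (Finsupp.single p₁ (1/2 : ℝ) + Finsupp.single p₂ (1/2 : ℝ)) (Finsupp.single q 1)
      = (1/2 : ℝ) ^ α * dist p₁ q + (1/2 : ℝ) ^ α * dist p₂ q := by
  set a : Y →₀ ℝ := Finsupp.single p₁ (1/2 : ℝ) + Finsupp.single p₂ (1/2 : ℝ) with ha_def
  have hd : Disjoint (Finsupp.single p₁ (1/2 : ℝ)).support (Finsupp.single p₂ (1/2 : ℝ)).support := by
    rw [Finsupp.support_single_ne_zero _ (by norm_num), Finsupp.support_single_ne_zero _ (by norm_num)]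
    exact Finset.disjoint_singleton.mpr hpq
  have hsupp : a.support = {p₁, p₂} := by
    rw [ha_def, Finsupp.support_add_eq hd,
      Finsupp.support_single_ne_zero _ (by norm_num : (1/2:ℝ) ≠ 0),
      Finsupp.support_single_ne_zero _ (by norm_num : (1/2:ℝ) ≠ 0)]
    rfl
  have hap1 : a p₁ = 1/2 := by
    simp [ha_def, Finsupp.single_eq_of_ne' (Ne.symm hpq)]
  have hap2 : a p₂ = 1/2 := by
    simp [ha_def, Finsupp.single_eq_of_ne' hpq]
  have ha : ∀ x, 0 ≤ a x := by
    intro x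
    rw [ha_def]
    simp only [Finsupp.add_apply]
    have h : ∀ p : Y, 0 ≤ Finsupp.single p (1/2 : ℝ) x := fun p => by
      rw [Finsupp.single_apply]; split <;> norm_num
    exact add_nonneg (h p₁) (h p₂)
  have hw : ∑ x ∈ a.support, a x = 1 := by
    rw [hsupp, Finset.sum_pair hpq, hap1, hap2]; norm_num
  rw [Jalpha_single α a ha q 1 hw, hsupp, Finset.sum_pair hpq, hap1, hap2]

lemma Jalpha_one_single {Y : Type*} [MetricSpace Y] (α : ℝ) (q o : Y) :
    Jalpha α (Finsupp.single q (1:ℝ)) (Finsupp.single o 1) = dist q o := by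
  have hsupp : (Finsupp.single q (1:ℝ)).support = {q} :=
    Finsupp.support_single_ne_zero _ one_ne_zero
  have hw : ∑ x ∈ (Finsupp.single q (1:ℝ)).support, Finsupp.single q (1:ℝ) x = 1 := by
    rw [hsupp, Finset.sum_singleton, Finsupp.single_eq_same]
  rw [Jalpha_single α _ (fun x => by
      rcases eq_or_ne x q with rfl | h
      · simp
      · simp [Finsupp.single_eq_of_ne' (Ne.symm h)]) o 1 hw,
    hsupp, Finset.sum_singleton, Finsupp.single_eq_same, Real.one_rpow, one_mul]

lemma dist_pt (u v u' v' : ℝ) :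
    dist ((WithLp.equiv 2 (Fin 2 → ℝ)).symm ![u, v]) ((WithLp.equiv 2 (Fin 2 → ℝ)).symm ![u', v'])
      = Real.sqrt ((u - u') ^ 2 + (v - v') ^ 2) := by
  rw [EuclideanSpace.dist_eq]
  simp [Fin.sum_univ_two, Real.dist_eq, sq_abs]

lemma pt_ne (u v u' v' : ℝ) (h : u ≠ u') :
    (WithLp.equiv 2 (Fin 2 → ℝ)).symm ![u, v] ≠ (WithLp.equiv 2 (Fin 2 → ℝ)).symm ![u', v'] := by
  intro he
  have h0 := congrFun ((WithLp.equiv 2 (Fin 2 → ℝ)).symm.injective he) 0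
  simp at h0
  exact h h0

theorem stmt_18 (α : ℝ) (hα : α < 1) :
    ∃ y₀ : ℝ, ∀ y ≥ y₀,
      (2 * (1 / 2 : ℝ) ^ α * Real.sqrt 2 + y
        < 2 * (1 / 2 : ℝ) ^ α * Real.sqrt (1 + (y + 1) ^ 2)) ∧
      (let pt : ℝ → ℝ → EuclideanSpace ℝ (Fin 2) :=
        fun u v => (WithLp.equiv 2 (Fin 2 → ℝ)).symm ![u, v]
      let a : EuclideanSpace ℝ (Fin 2) →₀ ℝ :=
        Finsupp.single (pt (-1) (y + 1)) (1 / 2) + Finsupp.single (pt 1 (y + 1)) (1 / 2)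
      let b : EuclideanSpace ℝ (Fin 2) →₀ ℝ := Finsupp.single (pt 0 0) 1
      let c : EuclideanSpace ℝ (Fin 2) →₀ ℝ := Finsupp.single (pt 0 y) 1
      Jalpha α a c + Jalpha α c b < Jalpha α a b) := by
  set c0 : ℝ := (1 / 2 : ℝ) ^ α with hc0_def
  have hc0 : 0 < c0 := Real.rpow_pos_of_pos (by norm_num) α
  have h2c : 1 < 2 * c0 := by
    have : (1/2 : ℝ) ^ (1:ℝ) < (1/2 : ℝ) ^ α :=
      Real.rpow_lt_rpow_of_exponent_gt (by norm_num) (by norm_num) hα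
    rw [Real.rpow_one] at this
    rw [hc0_def]; linarith
  refine ⟨max 1 (2 * c0 * (Real.sqrt 2 - 1) / (2 * c0 - 1) + 1), fun y hy => ?_⟩
  have hy1 : 1 ≤ y := le_trans (le_max_left _ _) hy
  have hy2 : 2 * c0 * (Real.sqrt 2 - 1) < (2 * c0 - 1) * y := by
    have h := le_trans (le_max_right _ _) hy
    have hp : 0 < 2 * c0 - 1 := by linarith
    rw [← div_lt_iff₀' hp]
    linarith
  have hsq : y + 1 ≤ Real.sqrt (1 + (y + 1) ^ 2) := by
    have h1 : y + 1 = Real.sqrt ((y + 1) ^ 2) := (Real.sqrt_sq (by linarith)).symm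
    rw [h1]
    exact Real.sqrt_le_sqrt (by nlinarith)
  have hineq : 2 * c0 * Real.sqrt 2 + y < 2 * c0 * Real.sqrt (1 + (y + 1) ^ 2) := by
    have h1 : 2 * c0 * (y + 1) ≤ 2 * c0 * Real.sqrt (1 + (y + 1) ^ 2) :=
      mul_le_mul_of_nonneg_left hsq (by linarith)
    nlinarith
  refine ⟨hineq, ?_⟩
  show Jalpha α
      (Finsupp.single ((WithLp.equiv 2 (Fin 2 → ℝ)).symm ![(-1 : ℝ), y + 1]) (1 / 2)
        + Finsupp.single ((WithLp.equiv 2 (Fin 2 → ℝ)).symm ![(1 : ℝ), y + 1]) (1 / 2))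
      (Finsupp.single ((WithLp.equiv 2 (Fin 2 → ℝ)).symm ![(0 : ℝ), y]) 1)
    + Jalpha α (Finsupp.single ((WithLp.equiv 2 (Fin 2 → ℝ)).symm ![(0 : ℝ), y]) 1)
      (Finsupp.single ((WithLp.equiv 2 (Fin 2 → ℝ)).symm ![(0 : ℝ), (0 : ℝ)]) 1)
    < Jalpha α
      (Finsupp.single ((WithLp.equiv 2 (Fin 2 → ℝ)).symm ![(-1 : ℝ), y + 1]) (1 / 2)
        + Finsupp.single ((WithLp.equiv 2 (Fin 2 → ℝ)).symm ![(1 : ℝ), y + 1]) (1 / 2))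
      (Finsupp.single ((WithLp.equiv 2 (Fin 2 → ℝ)).symm ![(0 : ℝ), (0 : ℝ)]) 1)
  have hne : ((WithLp.equiv 2 (Fin 2 → ℝ)).symm ![(-1 : ℝ), y + 1] : EuclideanSpace ℝ (Fin 2))
      ≠ (WithLp.equiv 2 (Fin 2 → ℝ)).symm ![(1 : ℝ), y + 1] := pt_ne _ _ _ _ (by norm_num)
  rw [Jalpha_two_single α _ _ _ hne, Jalpha_one_single, Jalpha_two_single α _ _ _ hne,
    dist_pt, dist_pt, dist_pt, dist_pt, dist_pt]
  have e1 : ((-1 : ℝ) - 0) ^ 2 + (y + 1 - y) ^ 2 = 2 := by ring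
  have e2 : ((1 : ℝ) - 0) ^ 2 + (y + 1 - y) ^ 2 = 2 := by ring
  have e3 : ((-1 : ℝ) - 0) ^ 2 + (y + 1 - 0) ^ 2 = 1 + (y + 1) ^ 2 := by ring
  have e4 : ((1 : ℝ) - 0) ^ 2 + (y + 1 - 0) ^ 2 = 1 + (y + 1) ^ 2 := by ring
  have e5 : ((0 : ℝ) - 0) ^ 2 + (y - 0) ^ 2 = y ^ 2 := by ring
  rw [e1, e2, e3, e4, e5, Real.sqrt_sq (by linarith : (0:ℝ) ≤ y)]
  rw [← hc0_def]
  linarith
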